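/- Let (W,S) be a Coxeter system and X ⊆ W. If X is convex in the left weak order and has a unique maximal element under the left weak order, then X is ascent-compatible. -/

import Mathlib

variable {B W : Type*} [Group W] {M : CoxeterMatrix B}

/-- Ascent-compatibility of a subset of a Coxeter group. -/
def CoxeterSystem.AscentCompatible (cs : CoxeterSystem M W) (X : Set W) : Prop :=
  ∀ u ∈ X, ∀ v ∈ X, ∀ s t : B,
    ¬ cs.IsLeftDescent u s → ¬ cs.IsLeftDescent v t →
    u⁻¹ * cs.simple s * u = v⁻¹ * cs.simple t * v →
    (cs.simple s * u ∈ X ↔ cs.simple t * v ∈ X)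

/-- The left weak order: `x ≤_L y` iff `Inv(x) ⊆ Inv(y)` (right inversion sets). -/
def CoxeterSystem.leftWeakLE (cs : CoxeterSystem M W) (x y : W) : Prop :=
  ∀ t : W, cs.IsRightInversion x t → cs.IsRightInversion y t

/-- A set `X` is convex in the left weak order if it contains every interval between
two of its elements. -/
def CoxeterSystem.ConvexInLeftWeakOrder (cs : CoxeterSystem M W) (X : Set W) : Prop :=
  ∀ x ∈ X, ∀ y ∈ X, ∀ z : W, cs.leftWeakLE x z → cs.leftWeakLE z y → z ∈ X

namespace CoxAux

open CoxeterSystem List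

attribute [local instance] Classical.propDecidable

variable (cs : CoxeterSystem M W)

local prefix:100 "σ" => cs.simple
local prefix:100 "π" => cs.wordProd

/-- Conjugation action of `W` on `ZMod 2`-valued functions on `W`. -/
def conjAct : W →* MulAut (W → Multiplicative (ZMod 2)) where
  toFun w :=
    { toFun := fun g x => g (w⁻¹ * x * w)
      invFun := fun g x => g (w * x * w⁻¹)
      left_inv := fun g => by funext x; simp [mul_assoc]
      right_inv := fun g => by funext x; simp [mul_assoc]
      map_mul' := fun g h => rfl }
  map_one' := by ext g x; simp
  map_mul' := fun a b => by ext g x; simp [mul_assoc]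

@[simp] theorem conjAct_apply (w : W) (g : W → Multiplicative (ZMod 2)) (x : W) :
    conjAct w g x = g (w⁻¹ * x * w) := rfl

noncomputable def ind (t : W) : W → Multiplicative (ZMod 2) :=
  fun x => if x = t then Multiplicative.ofAdd 1 else 1

/-- Our auxiliary group. -/
abbrev G (W : Type*) [Group W] := (W → Multiplicative (ZMod 2)) ⋊[conjAct] W

noncomputable def gen (i : B) : G W := ⟨ind (σ i), σ i⟩

noncomputable def F (ω : List B) : G W := (ω.map (gen cs)).prod

@[simp] theorem F_nil : F cs [] = 1 := rfl

theorem F_cons (i : B) (ω : List B) : F cs (i :: ω) = gen cs i * F cs ω := by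
  simp [F]

theorem F_append (ω₁ ω₂ : List B) : F cs (ω₁ ++ ω₂) = F cs ω₁ * F cs ω₂ := by
  simp [F]

/-- Count (mod 2) of `t` in the left inversion sequence of `ω`. -/
noncomputable def Nf (ω : List B) (t : W) : Multiplicative (ZMod 2) :=
  Multiplicative.ofAdd (((cs.leftInvSeq ω).count t : ZMod 2))

theorem Nf_cons (i : B) (ω : List B) (t : W) :
    Nf cs (i :: ω) t = ind (σ i) t * Nf cs ω (σ i * t * σ i) := by
  have hinj : Function.Injective (MulAut.conj (σ i) : W → W) := (MulAut.conj (σ i)).injective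
  have h1 : t = (MulAut.conj (σ i)) (σ i * t * σ i) := by
    simp [MulAut.conj_apply, mul_assoc, cs.simple_mul_simple_cancel_left]
  have hl : cs.leftInvSeq (i :: ω) = σ i :: List.map (MulAut.conj (σ i)) (cs.leftInvSeq ω) := rfl
  have hcount : (cs.leftInvSeq (i :: ω)).count t
      = (if t = σ i then 1 else 0) + (cs.leftInvSeq ω).count (σ i * t * σ i) := by
    rw [hl, List.count_cons]
    nth_rw 1 [h1]
    rw [List.count_map_of_injective _ _ hinj]
    by_cases h : t = σ i
    · simp [h, Nat.add_comm]
    · have h' : ¬ σ i = t := fun hh => h hh.symm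
      simp [h, h', beq_iff_eq]
  unfold Nf ind
  rw [hcount]
  push_cast
  rw [ofAdd_add]
  by_cases h : t = σ i <;> simp [h]


@[simp] theorem Nf_nil (t : W) : Nf cs [] t = 1 := by
  simp [Nf, leftInvSeq]

theorem F_right (ω : List B) : (F cs ω).right = π ω := by
  induction ω with
  | nil => simp [cs.wordProd_nil]
  | cons i ω ih => rw [F_cons]; simp [ih, gen, cs.wordProd_cons]

theorem F_left (ω : List B) (t : W) : (F cs ω).left t = Nf cs ω t := by
  induction ω generalizing t with
  | nil => simp [Pi.one_apply]
  | cons i ω ih =>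
      rw [F_cons, SemidirectProduct.mul_left, Nf_cons]
      show ind (σ i) t * conjAct (σ i) (F cs ω).left t = _
      rw [conjAct_apply, cs.inv_simple, ih]

theorem Nf_append (ω₁ ω₂ : List B) (t : W) :
    Nf cs (ω₁ ++ ω₂) t = Nf cs ω₁ t * Nf cs ω₂ ((π ω₁)⁻¹ * t * π ω₁) := by
  have h := congrFun (congrArg SemidirectProduct.left (F_append cs ω₁ ω₂)) t
  rw [SemidirectProduct.mul_left] at h
  simpa [F_left, F_right, conjAct_apply] using h

theorem leftInvSeq_eq_map (ω : List B) :
    cs.leftInvSeq ω = (cs.rightInvSeq ω).map (fun x => π ω * x * (π ω)⁻¹) := by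
  induction ω with
  | nil => rfl
  | cons i ω ih =>
      show σ i :: List.map (MulAut.conj (σ i)) (cs.leftInvSeq ω) = _
      show _ = (((π ω)⁻¹ * σ i * π ω) :: cs.rightInvSeq ω).map
        (fun x => π (i :: ω) * x * (π (i :: ω))⁻¹)
      rw [List.map_cons, ih, List.map_map]
      congr 1
      · rw [cs.wordProd_cons]
        group
      · apply List.map_congr_left
        intro x hx
        simp [MulAut.conj_apply, cs.wordProd_cons, cs.inv_simple, mul_assoc]

theorem count_leftInvSeq_eq (ω : List B) (t : W) :
    (cs.leftInvSeq ω).count t = (cs.rightInvSeq ω).count ((π ω)⁻¹ * t * π ω) := by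
  rw [leftInvSeq_eq_map]
  have hinj : Function.Injective (fun x : W => π ω * x * (π ω)⁻¹) := by
    intro a b hab
    simpa using mul_left_cancel (mul_right_cancel hab)
  have h1 : t = (fun x : W => π ω * x * (π ω)⁻¹) ((π ω)⁻¹ * t * π ω) := by group
  nth_rw 1 [h1]
  exact List.count_map_of_injective _ _ hinj _

/-- `(Φ t).left t = ofAdd 1` for a reflection `t`, word-level version. -/
theorem Nf_reflection_word (α : List B) (i : B) :
    Nf cs (α ++ i :: α.reverse) (π α * σ i * (π α)⁻¹) = Multiplicative.ofAdd 1 := by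
  set w := π α
  set t := w * σ i * w⁻¹ with ht
  rw [Nf_append]
  have h1 : w⁻¹ * t * w = σ i := by rw [ht]; group
  rw [h1, Nf_cons]
  have h2 : σ i * σ i * σ i = σ i := by
    rw [cs.simple_mul_simple_self]; group
  rw [h2]
  have h3 : Nf cs α.reverse (σ i) = Nf cs α t := by
    unfold Nf
    congr 1
    have : (cs.leftInvSeq α.reverse).count (σ i) = (cs.rightInvSeq α).count (σ i) := by
      rw [cs.leftInvSeq_reverse, List.count_reverse]
    rw [this, count_leftInvSeq_eq]
    congr 1
    rw [ht]; simp only [w]; group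
  rw [h3]
  have hind : ind (σ i) (σ i) = Multiplicative.ofAdd 1 := by simp [ind]
  rw [hind]
  have hsq : ∀ x : Multiplicative (ZMod 2), x * x = 1 := by decide
  rw [mul_comm (Multiplicative.ofAdd (1 : ZMod 2)) (Nf cs α t), ← mul_assoc, hsq, one_mul]


section Lift

variable (i i' : B)

theorem simple_mul_q_pow (k : ℕ) :
    σ i * ((σ i * σ i') ^ k)⁻¹ = (σ i * σ i') ^ k * σ i := by
  induction k with
  | zero => simp
  | succ k ih =>
      have h1 : σ i * (σ i * σ i')⁻¹ = (σ i * σ i') * σ i := by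
        rw [mul_inv_rev, cs.inv_simple, cs.inv_simple, mul_assoc]
      calc σ i * ((σ i * σ i') ^ (k + 1))⁻¹
          = σ i * (σ i * σ i')⁻¹ * ((σ i * σ i') ^ k)⁻¹ := by rw [pow_succ]; group
        _ = (σ i * σ i') * (σ i * ((σ i * σ i') ^ k)⁻¹) := by rw [h1]; group
        _ = (σ i * σ i') ^ (k + 1) * σ i := by rw [ih, pow_succ']; group

theorem q_pow_conj_simple (k : ℕ) :
    (σ i * σ i') ^ k * σ i * ((σ i * σ i') ^ k)⁻¹ = (σ i * σ i') ^ (2 * k) * σ i := by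
  rw [mul_assoc, simple_mul_q_pow, ← mul_assoc, ← pow_add, two_mul]

theorem Nf_pair (x : W) :
    Nf cs [i, i'] x = Multiplicative.ofAdd
      ((if x = σ i then (1 : ZMod 2) else 0) + (if x = σ i * σ i' * σ i then 1 else 0)) := by
  rw [show ([i, i'] : List B) = i :: [i'] from rfl, Nf_cons]
  rw [show ([i'] : List B) = i' :: [] from rfl, Nf_cons]
  rw [Nf_nil, mul_one]
  have hcond : σ i * x * σ i = σ i' ↔ x = σ i * σ i' * σ i := by
    constructor
    · intro h
      calc x = σ i * (σ i * x * σ i) * σ i := by simp [mul_assoc]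
        _ = σ i * σ i' * σ i := by rw [h]
    · intro h
      rw [h]
      simp [mul_assoc]
  unfold ind
  rw [ofAdd_add]
  have e1 : (if x = σ i then Multiplicative.ofAdd (1 : ZMod 2) else 1)
      = Multiplicative.ofAdd (if x = σ i then (1 : ZMod 2) else 0) := by
    by_cases h : x = σ i <;> simp [h]
  have e2 : (if σ i * x * σ i = σ i' then Multiplicative.ofAdd (1 : ZMod 2) else 1)
      = Multiplicative.ofAdd (if x = σ i * σ i' * σ i then (1 : ZMod 2) else 0) := by
    by_cases h : x = σ i * σ i' * σ i
    · rw [if_pos (hcond.mpr h), if_pos h]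
    · rw [if_neg (fun hh => h (hcond.mp hh)), if_neg h]
      simp
  rw [e1, e2]

/-- The repeated word `[i, i', i, i', ...]` of length `2 * m`. -/
def rep (i i' : B) : ℕ → List B
  | 0 => []
  | m + 1 => i :: i' :: rep i i' m

theorem F_rep (m : ℕ) : F cs (rep i i' m) = (gen cs i * gen cs i') ^ m := by
  induction m with
  | zero => simp [rep]
  | succ m ih =>
      show F cs (i :: i' :: rep i i' m) = _
      rw [F_cons, F_cons, ih, pow_succ', mul_assoc]

theorem Nf_rep (m : ℕ) (t : W) :
    Nf cs (rep i i' m) t = ∏ k ∈ Finset.range m,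
      Nf cs [i, i'] (((σ i * σ i') ^ k)⁻¹ * t * (σ i * σ i') ^ k) := by
  induction m generalizing t with
  | zero => simp [rep]
  | succ m ih =>
      have hrep : rep i i' (m + 1) = [i, i'] ++ rep i i' m := rfl
      have hq : π [i, i'] = σ i * σ i' := by
        simp [cs.wordProd_cons, cs.wordProd_nil]
      rw [hrep, Nf_append, hq, ih, Finset.prod_range_succ']
      set q := σ i * σ i' with hqdef
      rw [mul_comm]
      congr 1
      · apply Finset.prod_congr rfl
        intro k _
        congr 1
        rw [pow_succ']
        group
      · congr 1
        group

theorem Nf_rep_eq_one (hq : (σ i * σ i') ^ (M i i') = 1) (t : W) :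
    Nf cs (rep i i' (M i i')) t = 1 := by
  rw [Nf_rep]
  have conj_iff : ∀ (k : ℕ) (a : W), (((σ i * σ i') ^ k)⁻¹ * t * (σ i * σ i') ^ k = a)
      ↔ (t = (σ i * σ i') ^ k * a * ((σ i * σ i') ^ k)⁻¹) := by
    intro k a
    constructor
    · intro h; rw [← h]; group
    · intro h; rw [h]; group
  have factor : ∀ k : ℕ, Nf cs [i, i'] (((σ i * σ i') ^ k)⁻¹ * t * (σ i * σ i') ^ k)
      = Multiplicative.ofAdd ((if t = (σ i * σ i') ^ (2 * k) * σ i then (1 : ZMod 2) else 0)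
          + (if t = (σ i * σ i') ^ (2 * k + 1) * σ i then 1 else 0)) := by
    intro k
    rw [Nf_pair]
    have hb : (σ i * σ i') ^ k * (σ i * σ i' * σ i) * ((σ i * σ i') ^ k)⁻¹
        = (σ i * σ i') ^ (2 * k + 1) * σ i := by
      calc (σ i * σ i') ^ k * (σ i * σ i' * σ i) * ((σ i * σ i') ^ k)⁻¹
          = (σ i * σ i') ^ (k + 1) * (σ i * ((σ i * σ i') ^ k)⁻¹) := by rw [pow_succ]; group
        _ = (σ i * σ i') ^ (k + 1) * ((σ i * σ i') ^ k * σ i) := by rw [simple_mul_q_pow]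
        _ = (σ i * σ i') ^ (2 * k + 1) * σ i := by
            rw [← mul_assoc, ← pow_add]
            congr 2
            omega
    simp only [conj_iff, q_pow_conj_simple, hb]
  simp only [factor]
  rw [← ofAdd_sum]
  have hper : ∀ j : ℕ, (if t = (σ i * σ i') ^ (M i i' + j) * σ i then (1 : ZMod 2) else 0)
      = (if t = (σ i * σ i') ^ j * σ i then 1 else 0) := by
    intro j
    rw [pow_add, hq, one_mul]
  have hsum : ∀ (g : ℕ → ZMod 2) (m : ℕ),
      ∑ k ∈ Finset.range m, (g (2 * k) + g (2 * k + 1)) = ∑ j ∈ Finset.range (2 * m), g j := by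
    intro g m
    induction m with
    | zero => simp
    | succ m ih =>
        rw [Finset.sum_range_succ, ih, show 2 * (m + 1) = 2 * m + 1 + 1 by ring,
          Finset.sum_range_succ, Finset.sum_range_succ, add_assoc]
  rw [hsum (fun j => if t = (σ i * σ i') ^ j * σ i then (1 : ZMod 2) else 0) (M i i'),
    two_mul, Finset.sum_range_add]
  simp only [hper]
  have h2 : ∀ a : ZMod 2, a + a = 0 := by decide
  rw [h2]
  rfl

theorem liftable : ∀ j j' : B, (gen cs j * gen cs j') ^ M j j' = 1 := by
  intro j j'
  rw [← F_rep]
  have hπ : ∀ m : ℕ, π (rep j j' m) = (σ j * σ j') ^ m := by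
    intro m
    induction m with
    | zero => simp [rep, cs.wordProd_nil]
    | succ m ih =>
        show π (j :: j' :: rep j j' m) = _
        rw [cs.wordProd_cons, cs.wordProd_cons, ih, pow_succ', mul_assoc]
  apply SemidirectProduct.ext
  · funext t
    rw [F_left]
    exact Nf_rep_eq_one cs j j' (cs.simple_mul_simple_pow j j') t
  · rw [F_right, hπ]
    exact cs.simple_mul_simple_pow j j'

end Lift


noncomputable def Phi : W →* G W := cs.lift ⟨gen cs, liftable cs⟩

theorem Phi_simple (i : B) : Phi cs (σ i) = gen cs i := cs.lift_apply_simple _ i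

theorem Phi_wordProd (ω : List B) : Phi cs (π ω) = F cs ω := by
  induction ω with
  | nil => simp [cs.wordProd_nil, F]
  | cons i ω ih => rw [cs.wordProd_cons, map_mul, Phi_simple, F_cons, ih]

theorem Phi_right (w : W) : (Phi cs w).right = w := by
  have h : (SemidirectProduct.rightHom.comp (Phi cs) : W →* W) = MonoidHom.id W := by
    apply cs.ext_simple
    intro i
    simp [Phi_simple, gen]
  calc (Phi cs w).right = (SemidirectProduct.rightHom.comp (Phi cs)) w := rfl
    _ = w := by rw [h]; rfl

theorem Phi_left_mul (w₁ w₂ t : W) :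
    (Phi cs (w₁ * w₂)).left t = (Phi cs w₁).left t * (Phi cs w₂).left (w₁⁻¹ * t * w₁) := by
  rw [map_mul, SemidirectProduct.mul_left, Pi.mul_apply, conjAct_apply, Phi_right]

theorem isLeftInversion_of_phi {w t : W}
    (h : (Phi cs w).left t = Multiplicative.ofAdd 1) : cs.IsLeftInversion w t := by
  obtain ⟨ω, hred, rfl⟩ := cs.exists_reduced_word' w
  rw [Phi_wordProd, F_left] at h
  have hcnt : (((cs.leftInvSeq ω).count t : ℕ) : ZMod 2) = 1 := by
    have := congrArg Multiplicative.toAdd h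
    simpa [Nf] using this
  have hmem : t ∈ cs.leftInvSeq ω := by
    by_contra hmem
    rw [List.count_eq_zero_of_not_mem hmem] at hcnt
    simp at hcnt
  exact cs.isLeftInversion_of_mem_leftInvSeq hred hmem

theorem phi_left_self {t : W} (ht : cs.IsReflection t) :
    (Phi cs t).left t = Multiplicative.ofAdd 1 := by
  obtain ⟨w, i, rfl⟩ := ht
  obtain ⟨α, -, hw⟩ := cs.exists_reduced_word w
  have hπ : w * σ i * w⁻¹ = π (α ++ i :: α.reverse) := by
    rw [cs.wordProd_append, cs.wordProd_cons, cs.wordProd_reverse, ← hw, mul_assoc]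
  rw [hπ, Phi_wordProd, F_left]
  have h := Nf_reflection_word cs α i
  rw [← hw] at h
  rw [hπ] at h
  exact h

theorem phi_left_of_isLeftInversion {w t : W} (h : cs.IsLeftInversion w t) :
    (Phi cs w).left t = Multiplicative.ofAdd 1 := by
  have htr : cs.IsReflection t := h.1
  have htt : t * t = 1 := htr.mul_self
  have hnotinv : (Phi cs (t * w)).left t = 1 := by
    have two : ∀ x : Multiplicative (ZMod 2), x = 1 ∨ x = Multiplicative.ofAdd 1 := by decide
    rcases two ((Phi cs (t * w)).left t) with h1 | h1
    · exact h1
    · exfalso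
      have hc := isLeftInversion_of_phi cs (w := t * w) h1
      have : cs.length (t * (t * w)) < cs.length (t * w) := hc.2
      rw [← mul_assoc, htt, one_mul] at this
      have h2 := h.2
      omega
      -- this : ℓ w < ℓ (t*w), h.2 : ℓ (t*w) < ℓ w
  have hw : w = t * (t * w) := by rw [← mul_assoc, htt, one_mul]
  have hkey := Phi_left_mul cs t (t * w) t
  rw [← hw] at hkey
  have ht3 : t⁻¹ * t * t = t := by group
  rw [ht3, hnotinv, mul_one, phi_left_self cs htr] at hkey
  exact hkey

/-- The key inversion-set lemma: if `i` is a left ascent of `u`, then the right inversions of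
`σ i * u` are those of `u` together with `u⁻¹ * σ i * u`. -/
theorem isRightInversion_simple_mul_iff {u : W} {i : B} (hi : ¬ cs.IsLeftDescent u i) (r : W) :
    cs.IsRightInversion (σ i * u) r ↔ (cs.IsRightInversion u r ∨ r = u⁻¹ * σ i * u) := by
  have hr0 : cs.IsReflection (u⁻¹ * σ i * u) := by
    have := (cs.isReflection_simple i).conj u⁻¹
    simpa using this
  have hlen : cs.length (σ i * u) = cs.length u + 1 := cs.not_isLeftDescent_iff.mp hi
  constructor
  · rintro ⟨hrefl, hlt⟩
    by_cases hcase : r = u⁻¹ * σ i * u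
    · exact Or.inr hcase
    left
    refine ⟨hrefl, ?_⟩
    have hinv1 : cs.IsLeftInversion (σ i * u)⁻¹ r :=
      cs.isLeftInversion_inv_iff.mpr ⟨hrefl, hlt⟩
    have hphi := phi_left_of_isLeftInversion cs hinv1
    have hinv2 : (σ i * u)⁻¹ = u⁻¹ * σ i := by rw [mul_inv_rev, cs.inv_simple]
    rw [hinv2, Phi_left_mul] at hphi
    have hx : (u⁻¹)⁻¹ * r * u⁻¹ ≠ σ i := by
      intro hc
      apply hcase
      rw [inv_inv] at hc
      calc r = u⁻¹ * (u * r * u⁻¹) * u := by group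
        _ = u⁻¹ * σ i * u := by rw [hc]
    have hind : (Phi cs (σ i)).left ((u⁻¹)⁻¹ * r * u⁻¹) = 1 := by
      rw [Phi_simple]
      show ind (σ i) _ = 1
      rw [ind, if_neg hx]
    rw [hind, mul_one] at hphi
    have := isLeftInversion_of_phi cs hphi
    exact (cs.isLeftInversion_inv_iff.mp this).2
  · rintro (⟨hrefl, hlt⟩ | rfl)
    · refine ⟨hrefl, ?_⟩
      have h1 : cs.length (σ i * (u * r)) ≤ cs.length (u * r) + 1 := by
        rcases cs.length_simple_mul (u * r) i with h | h
        · omega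
        · omega
      have h2 : cs.length (σ i * u * r) ≤ cs.length u := by
        rw [mul_assoc]
        omega
      omega
    · refine ⟨hr0, ?_⟩
      have h1 : σ i * u * (u⁻¹ * σ i * u) = u := by
        calc σ i * u * (u⁻¹ * σ i * u) = σ i * (σ i * u) := by group
          _ = u := by rw [cs.simple_mul_simple_cancel_left]
      rw [h1, hlen]
      omega

end CoxAux

namespace CoxAux

variable (cs : CoxeterSystem M W)

theorem main_dir (X : Set W)
    (hconv : cs.ConvexInLeftWeakOrder X)
    (z : W) (hz : z ∈ X) (hmaxz : ∀ x ∈ X, cs.leftWeakLE x z)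
    {u v : W} (hu : u ∈ X) (hv : v ∈ X) {a b : B}
    (ha : ¬ cs.IsLeftDescent u a) (hb : ¬ cs.IsLeftDescent v b)
    (heq : u⁻¹ * cs.simple a * u = v⁻¹ * cs.simple b * v)
    (hsu : cs.simple a * u ∈ X) : cs.simple b * v ∈ X := by
  have hrrefl : cs.IsReflection (u⁻¹ * cs.simple a * u) := by
    have := (cs.isReflection_simple a).conj u⁻¹
    simpa using this
  have hlen_su : cs.length (cs.simple a * u) = cs.length u + 1 := cs.not_isLeftDescent_iff.mp ha
  have h1 : cs.IsRightInversion (cs.simple a * u) (u⁻¹ * cs.simple a * u) := by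
    refine ⟨hrrefl, ?_⟩
    have he : cs.simple a * u * (u⁻¹ * cs.simple a * u) = u := by
      calc cs.simple a * u * (u⁻¹ * cs.simple a * u)
          = cs.simple a * (cs.simple a * u) := by group
        _ = u := by rw [cs.simple_mul_simple_cancel_left]
    rw [he, hlen_su]
    omega
  have hz_r : cs.IsRightInversion z (u⁻¹ * cs.simple a * u) := hmaxz _ hsu _ h1
  have h3 : cs.leftWeakLE v (cs.simple b * v) := by
    intro x hx
    exact (isRightInversion_simple_mul_iff cs hb x).mpr (Or.inl hx)
  have h4 : cs.leftWeakLE (cs.simple b * v) z := by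
    intro x hx
    rcases (isRightInversion_simple_mul_iff cs hb x).mp hx with h | hx2
    · exact hmaxz v hv x h
    · rw [hx2, ← heq]
      exact hz_r
  exact hconv v hv z hz (cs.simple b * v) h3 h4

end CoxAux

/-- If `X ⊆ W` is convex in the left weak order and has a unique maximal element under the left
weak order, then `X` is ascent-compatible. -/
theorem convex_with_max_ascentCompatible (cs : CoxeterSystem M W) (X : Set W)
    (hconv : cs.ConvexInLeftWeakOrder X)
    (hmax : ∃ z ∈ X, ∀ x ∈ X, cs.leftWeakLE x z) :
    cs.AscentCompatible X := by
  obtain ⟨z, hz, hmaxz⟩ := hmax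
  intro u hu v hv s t hs ht heq
  constructor
  · exact fun h => CoxAux.main_dir cs X hconv z hz hmaxz hu hv hs ht heq h
  · exact fun h => CoxAux.main_dir cs X hconv z hz hmaxz hv hu ht hs heq.symm h
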